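/- Roach motel reordering is a valid refinement: for the concrete threads T and T' defined below, check(T',T) holds. -/

import Mathlib

namespace DRF

/-! Common model: shared-memory concurrency with locks (SC-for-DRF). -/

/-- An action: read or write a memory location, or acquire/release a lock. -/
inductive Action (M L : Type) : Type where
  | rd : M → Action M L
  | wr : M → Action M L
  | lk : L → Action M L
  | ul : L → Action M L
deriving DecidableEq

/-- A thread: a deterministic labelled transition system with program counters `H`,
initial counter `h0`, and a partial step function; `rd/lk/ul` leave the state unchanged,
a `wr x` step may change the state only at `x`. -/
structure Thread (M L : Type) where
  H : Type
  h0 : H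
  step : H → (M → ℤ) → Option (Action M L × H × (M → ℤ))
  wf : ∀ h s a h' s', step h s = some (a, h', s') →
      ((∀ x, a ≠ Action.wr x) → s' = s) ∧
      (∀ x, a = Action.wr x → ∀ y, y ≠ x → s' y = s y)

/-- A program: a finite family of threads. -/
structure Program (M L : Type) where
  n : ℕ
  threads : Fin n → Thread M L

/-- A configuration: one program counter per thread, a state, and a lock map. -/
structure Config {M L : Type} (P : Program M L) where
  pcs : ∀ i : Fin P.n, (P.threads i).H
  st : M → ℤ
  lks : L → Option (Fin P.n)

/-- The interleaving transition relation: thread `i` performs its next step with action `a`. -/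
def ProgStep {M L : Type} [DecidableEq M] [DecidableEq L] (P : Program M L)
    (c : Config P) (i : Fin P.n) (a : Action M L) (c' : Config P) : Prop :=
  ∃ (h' : (P.threads i).H) (s' : M → ℤ),
    (P.threads i).step (c.pcs i) c.st = some (a, h', s') ∧
    c'.pcs = Function.update c.pcs i h' ∧
    c'.st = s' ∧
    (match a with
     | Action.rd _ => c'.lks = c.lks
     | Action.wr _ => c'.lks = c.lks
     | Action.lk l => c.lks l = none ∧ c'.lks = Function.update c.lks l (some i)
     | Action.ul l => c.lks l = some i ∧ c'.lks = Function.update c.lks l none)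

/-- An execution prefix of `P` from state `s0` with `n` transition steps. -/
structure ExecPrefix {M L : Type} [DecidableEq M] [DecidableEq L] (P : Program M L)
    (s0 : M → ℤ) (n : ℕ) where
  cfg : Fin (n + 1) → Config P
  thr : Fin n → Fin P.n
  act : Fin n → Action M L
  init_pcs : ∀ i, (cfg 0).pcs i = (P.threads i).h0
  init_st : (cfg 0).st = s0
  init_lks : ∀ l, (cfg 0).lks l = none
  steps : ∀ k : Fin n, ProgStep P (cfg k.castSucc) (thr k) (act k) (cfg k.succ)

variable {M L : Type} [DecidableEq M] [DecidableEq L]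

/-- Action `a` is a memory access of location `x`. -/
def isAccess (a : Action M L) (x : M) : Prop := a = Action.rd x ∨ a = Action.wr x

/-- Steps `i` and `j` conflict: both access the same location and at least one writes it. -/
def Conflict {P : Program M L} {s0 : M → ℤ} {n : ℕ} (e : ExecPrefix P s0 n)
    (i j : Fin n) : Prop :=
  ∃ x : M, isAccess (e.act i) x ∧ isAccess (e.act j) x ∧
    (e.act i = Action.wr x ∨ e.act j = Action.wr x)

/-- Sequenced-before. -/
def sb {P : Program M L} {s0 : M → ℤ} {n : ℕ} (e : ExecPrefix P s0 n) (i j : Fin n) : Prop :=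
  i < j ∧ e.thr i = e.thr j

/-- Synchronizes-with. -/
def sw {P : Program M L} {s0 : M → ℤ} {n : ℕ} (e : ExecPrefix P s0 n) (i j : Fin n) : Prop :=
  i < j ∧ ∃ l : L, e.act i = Action.ul l ∧ e.act j = Action.lk l

/-- Happens-before: the transitive closure of `sb ∪ sw`. -/
def hb {P : Program M L} {s0 : M → ℤ} {n : ℕ} (e : ExecPrefix P s0 n) (i j : Fin n) : Prop :=
  Relation.TransGen (fun p q => sb e p q ∨ sw e p q) i j

/-- `e` contains an hb data race. -/
def hbrace {P : Program M L} {s0 : M → ℤ} {n : ℕ} (e : ExecPrefix P s0 n) : Prop :=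
  ∃ i j : Fin n, i < j ∧ e.thr i ≠ e.thr j ∧ Conflict e i j ∧ ¬ hb e i j

/-- `e` contains an adjacent-access data race. -/
def aarace {P : Program M L} {s0 : M → ℤ} {n : ℕ} (e : ExecPrefix P s0 n) : Prop :=
  ∃ i j : Fin n, (j : ℕ) = (i : ℕ) + 1 ∧ e.thr i ≠ e.thr j ∧ Conflict e i j

/-- Some execution of `P` contains an adjacent-access data race. -/
def race (P : Program M L) : Prop :=
  ∃ (s0 : M → ℤ) (n : ℕ) (e : ExecPrefix P s0 n), aarace e

def racefree (P : Program M L) : Prop := ¬ race P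

/-- All threads have terminated in configuration `c`. -/
def terminatedAll (P : Program M L) (c : Config P) : Prop :=
  ∀ i : Fin P.n, (P.threads i).step (c.pcs i) c.st = none

/-- Program semantics: the set of initial/final state pairs of finite complete executions. -/
def Msem (P : Program M L) : Set ((M → ℤ) × (M → ℤ)) :=
  { p | ∃ (n : ℕ) (e : ExecPrefix P p.1 n),
      terminatedAll P (e.cfg (Fin.last n)) ∧ (e.cfg (Fin.last n)).st = p.2 }

/-- `T ∥ C`: the program consisting of `T` together with the threads of `C`. -/
def par (T : Thread M L) (C : Program M L) : Program M L :=
  ⟨C.n + 1, Fin.cons T C.threads⟩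

/-! Thread-alone executions. -/

/-- An execution fragment of thread `T` run alone, with `n` steps. -/
structure Frag (T : Thread M L) (n : ℕ) where
  pc : Fin (n + 1) → T.H
  st : Fin (n + 1) → (M → ℤ)
  act : Fin n → Action M L
  steps : ∀ k : Fin n, T.step (pc k.castSucc) (st k.castSucc) = some (act k, pc k.succ, st k.succ)

/-- An infinite execution of thread `T` run alone. -/
structure InfRun (T : Thread M L) where
  pc : ℕ → T.H
  st : ℕ → (M → ℤ)
  act : ℕ → Action M L
  steps : ∀ k : ℕ, T.step (pc k) (st k) = some (act k, pc (k + 1), st (k + 1))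

/-- Number of `lk l` steps among the first `k` steps of `f`. -/
def lkCnt {T : Thread M L} {n : ℕ} (f : Frag T n) (l : L) (k : ℕ) : ℕ :=
  (Finset.univ.filter (fun i : Fin n => (i : ℕ) < k ∧ f.act i = Action.lk l)).card

/-- Number of `ul l` steps among the first `k` steps of `f`. -/
def ulCnt {T : Thread M L} {n : ℕ} (f : Frag T n) (l : L) (k : ℕ) : ℕ :=
  (Finset.univ.filter (fun i : Fin n => (i : ℕ) < k ∧ f.act i = Action.ul l)).card

/-- `T` is well-locked for lock `l`: run alone from its initial counter, its first step is
`lk l`; `lk l` and `ul l` steps strictly alternate starting with `lk l`; every infinite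
execution contains infinitely many lock operations; and every terminated execution has as
many `ul l` steps as `lk l` steps (the last `lk l` is matched by an `ul l`). -/
def WellLocked (T : Thread M L) (l : L) : Prop :=
  (∀ s a h' s', T.step T.h0 s = some (a, h', s') → a = Action.lk l) ∧
  (∀ (n : ℕ) (f : Frag T n), f.pc 0 = T.h0 →
     ∀ k : Fin n,
       (f.act k = Action.lk l → lkCnt f l k = ulCnt f l k) ∧
       (f.act k = Action.ul l → lkCnt f l k = ulCnt f l k + 1)) ∧
  (∀ r : InfRun T, r.pc 0 = T.h0 →
     ∀ m : ℕ, ∃ k : ℕ, m ≤ k ∧ ((∃ l' : L, r.act k = Action.lk l') ∨ (∃ l' : L, r.act k = Action.ul l'))) ∧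
  (∀ (n : ℕ) (f : Frag T n), f.pc 0 = T.h0 →
     T.step (f.pc (Fin.last n)) (f.st (Fin.last n)) = none →
     lkCnt f l n = ulCnt f l n)

/-- Action `a` is a memory access (read or write). -/
def isMem : Action M L → Prop
  | Action.rd _ => True
  | Action.wr _ => True
  | _ => False

/-- `(T,h,s) →* (T,h',s')` with label `(l,(Ra,Wa),(Rb,Wb))`: `T` run alone goes from `(h,s)`
to `(h',s')` by one `lk l` step, then memory steps, one `ul l` step, then memory steps,
ending exactly when `T`'s next action is a lock acquire or `T` has terminated; `Ra`/`Wa` are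
the locations read/written strictly between the `lk` and the `ul`, and `Rb`/`Wb` those
read/written after the `ul`. -/
def StarStep (T : Thread M L) (h : T.H) (s : M → ℤ) (l : L)
    (Ra Wa Rb Wb : Set M) (h' : T.H) (s' : M → ℤ) : Prop :=
  ∃ (n : ℕ) (f : Frag T n) (hn : 0 < n) (k : Fin n),
    f.pc 0 = h ∧ f.st 0 = s ∧
    f.pc (Fin.last n) = h' ∧ f.st (Fin.last n) = s' ∧
    f.act ⟨0, hn⟩ = Action.lk l ∧
    f.act k = Action.ul l ∧
    (∀ i : Fin n, 0 < (i : ℕ) → (i : ℕ) < (k : ℕ) → isMem (f.act i)) ∧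
    (∀ i : Fin n, (k : ℕ) < (i : ℕ) → isMem (f.act i)) ∧
    ((∃ (l'' : L) (h'' : T.H) (s'' : M → ℤ), T.step h' s' = some (Action.lk l'', h'', s'')) ∨
      T.step h' s' = none) ∧
    Ra = {x : M | ∃ i : Fin n, 0 < (i : ℕ) ∧ (i : ℕ) < (k : ℕ) ∧ f.act i = Action.rd x} ∧
    Wa = {x : M | ∃ i : Fin n, 0 < (i : ℕ) ∧ (i : ℕ) < (k : ℕ) ∧ f.act i = Action.wr x} ∧
    Rb = {x : M | ∃ i : Fin n, (k : ℕ) < (i : ℕ) ∧ f.act i = Action.rd x} ∧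
    Wb = {x : M | ∃ i : Fin n, (k : ℕ) < (i : ℕ) ∧ f.act i = Action.wr x}

/-- A state trace with `m` lock-to-lock transitions: trace item `2*j` (at a `lk`) is
`(lkOf j, sE j, RE j, WE j)` and trace item `2*j+1` (from the `ul` to the next `lk`) is
`(RO j, WO j, sO j)`; components at indices `≥ m` are irrelevant junk. -/
structure STrace (M L : Type) where
  m : ℕ
  lkOf : ℕ → L
  sE : ℕ → (M → ℤ)
  sO : ℕ → (M → ℤ)
  RE : ℕ → Set M
  WE : ℕ → Set M
  RO : ℕ → Set M
  WO : ℕ → Set M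

/-- Accessed locations at even item `2*j`. -/
def AE {M L : Type} (t : STrace M L) (j : ℕ) : Set M := t.RE j ∪ t.WE j

/-- Accessed locations at odd item `2*j+1`. -/
def AO {M L : Type} (t : STrace M L) (j : ℕ) : Set M := t.RO j ∪ t.WO j

/-- The state trace set `𝕊(T)` of a thread `T`. -/
def STraces (T : Thread M L) : Set (STrace M L) :=
  { t | ∃ h : ℕ → T.H,
      h 0 = T.h0 ∧
      (∀ j < t.m, StarStep T (h j) (t.sE j) (t.lkOf j)
        (t.RE j) (t.WE j) (t.RO j) (t.WO j) (h (j + 1)) (t.sO j)) ∧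
      (∀ j, 0 < j → j < t.m → ∀ x ∈ AO t (j - 1), t.sO (j - 1) x = t.sE j x) }

/-- The length-`2*m` prefixes of the state traces `t'` and `t` match
(primed components from `t'`, unprimed from `t`). -/
def matchN {M L : Type} (t' t : STrace M L) (m : ℕ) : Prop :=
  (∀ j < m, t'.lkOf j = t.lkOf j) ∧
  (∀ j < m, t'.RE j ⊆ (if j = 0 then (∅ : Set M) else AO t (j - 1)) ∪ AE t j ∪ AO t j) ∧
  (∀ j < m, t'.WE j ⊆ (if j = 0 then (∅ : Set M) else t.WO (j - 1)) ∪ t.WE j ∪ t.WO j) ∧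
  (∀ j < m, t'.RO j ⊆ AO t j) ∧
  (∀ j < m, t'.WO j ⊆ t.WO j) ∧
  (∀ j < m, ∀ x : M, (j = 0 ∨ x ∉ AO t (j - 1)) → t'.sE j x = t.sE j x) ∧
  (∀ j, 0 < j → j < m → ∀ x ∈ AO t (j - 1) \ AO t' (j - 1), t'.sO (j - 1) x = t'.sE j x) ∧
  (∀ j < m, ∀ x ∉ t.WO j, t'.sO j x = t.sO j x)

/-- Two complete state traces match. -/
def matchTr {M L : Type} (t' t : STrace M L) : Prop :=
  t'.m = t.m ∧ matchN t' t t.m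

/-- The state-based refinement check `check(T',T)`. -/
def check (T' T : Thread M L) : Prop :=
  ∀ t' ∈ STraces T', ∃ t ∈ STraces T,
    matchTr t' t ∨
    (∃ p : ℕ, 0 < p ∧ p < t'.m ∧ p ≤ t.m ∧ matchN t' t p ∧
      ∃ x ∈ AO t (p - 1) \ AO t' (p - 1), t'.sO (p - 1) x ≠ t'.sE p x)

/-- Refinement `ref(T',T)`: for every context `C` (a finite family of threads well-locked
for `l`), if `T ∥ C` is race free then so is `T' ∥ C` and `𝕄(T' ∥ C) ⊆ 𝕄(T ∥ C)`. -/
def ref (T' T : Thread M L) (l : L) : Prop :=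
  ∀ C : Program M L, (∀ i : Fin C.n, WellLocked (C.threads i) l) →
    racefree (par T C) →
    racefree (par T' C) ∧ Msem (par T' C) ⊆ Msem (par T C)

/-- In configuration `c`, the next action of thread `t` is a lock acquire. -/
def nextIsLk (P : Program M L) (c : Config P) (t : Fin P.n) : Prop :=
  ∃ (l : L) (h' : (P.threads t).H) (s' : M → ℤ),
    (P.threads t).step (c.pcs t) c.st = some (Action.lk l, h', s')

/-- In configuration `c`, thread `t` has terminated. -/
def termAt (P : Program M L) (c : Config P) (t : Fin P.n) : Prop :=
  (P.threads t).step (c.pcs t) c.st = none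


/-! Concrete threads: memory locations `M = Fin 2` (`0` is `x`, `1` is `y`),
locks `L = Fin 1` (`0` is `l`). -/

/-- Step function of the original thread `T`: `lk l; x := 1; y := 1; ul l; y := 2; stop`. -/
def stepOrig : Fin 6 → (Fin 2 → ℤ) → Option (Action (Fin 2) (Fin 1) × Fin 6 × (Fin 2 → ℤ)) :=
  fun h s =>
    if h = 0 then some (Action.lk 0, 1, s)
    else if h = 1 then some (Action.wr 0, 2, Function.update s 0 1)
    else if h = 2 then some (Action.wr 1, 3, Function.update s 1 1)
    else if h = 3 then some (Action.ul 0, 4, s)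
    else if h = 4 then some (Action.wr 1, 5, Function.update s 1 2)
    else none

/-- The original thread `T`: `lk l; x := 1; y := 1; ul l; y := 2`. -/
def Torig : Thread (Fin 2) (Fin 1) where
  H := Fin 6
  h0 := 0
  step := stepOrig
  wf := by
    intro h s a h' s' hst
    fin_cases h <;> simp [stepOrig] at hst
    all_goals obtain ⟨rfl, rfl, rfl⟩ := hst
    all_goals constructor
    all_goals first
      | (intro hx; exact absurd rfl (hx _))
      | (intro _; rfl)
      | (intro x hx y hy
         cases hx
         exact Function.update_of_ne hy _ _)
      | (intro x hx; exact absurd hx (by simp))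

/-- Step function of the transformed thread `T'` (roach motel reordering):
`lk l; x := 1; y := 1; y := 2; ul l; stop`. -/
def stepTrans : Fin 6 → (Fin 2 → ℤ) → Option (Action (Fin 2) (Fin 1) × Fin 6 × (Fin 2 → ℤ)) :=
  fun h s =>
    if h = 0 then some (Action.lk 0, 1, s)
    else if h = 1 then some (Action.wr 0, 2, Function.update s 0 1)
    else if h = 2 then some (Action.wr 1, 3, Function.update s 1 1)
    else if h = 3 then some (Action.wr 1, 4, Function.update s 1 2)
    else if h = 4 then some (Action.ul 0, 5, s)
    else none

/-- The transformed thread `T'`: `lk l; x := 1; y := 1; y := 2; ul l`. -/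
def Ttrans : Thread (Fin 2) (Fin 1) where
  H := Fin 6
  h0 := 0
  step := stepTrans
  wf := by
    intro h s a h' s' hst
    fin_cases h <;> simp [stepTrans] at hst
    all_goals obtain ⟨rfl, rfl, rfl⟩ := hst
    all_goals constructor
    all_goals first
      | (intro hx; exact absurd rfl (hx _))
      | (intro _; rfl)
      | (intro x hx y hy
         cases hx
         exact Function.update_of_ne hy _ _)
      | (intro x hx; exact absurd hx (by simp))

/-! Auxiliary definitions and lemmas for the roach-motel theorem. -/

/-- The common final state. -/
def u012 (s : Fin 2 → ℤ) : Fin 2 → ℤ :=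
  Function.update (Function.update (Function.update s 0 1) 1 1) 1 2

/-- Expected actions of `Ttrans`. -/
def tact : ℕ → Action (Fin 2) (Fin 1)
  | 0 => Action.lk 0
  | 1 => Action.wr 0
  | 2 => Action.wr 1
  | 3 => Action.wr 1
  | _ => Action.ul 0

/-- Expected states of `Ttrans` from `s`. -/
def tstf (s : Fin 2 → ℤ) : ℕ → (Fin 2 → ℤ)
  | 0 => s
  | 1 => s
  | 2 => Function.update s 0 1
  | 3 => Function.update (Function.update s 0 1) 1 1
  | _ => u012 s

/-- Expected actions of `Torig`. -/
def oact : ℕ → Action (Fin 2) (Fin 1)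
  | 0 => Action.lk 0
  | 1 => Action.wr 0
  | 2 => Action.wr 1
  | 3 => Action.ul 0
  | _ => Action.wr 1

/-- Expected states of `Torig` from `s`. -/
def ostf (s : Fin 2 → ℤ) : ℕ → (Fin 2 → ℤ)
  | 0 => s
  | 1 => s
  | 2 => Function.update s 0 1
  | 3 => Function.update (Function.update s 0 1) 1 1
  | 4 => Function.update (Function.update s 0 1) 1 1
  | _ => u012 s

/-- The canonical solo run of `Torig`. -/
def origFrag (s : Fin 2 → ℤ) : Frag Torig 5 where
  pc := fun i => ⟨i.1, i.2⟩
  st := fun i => ostf s i.1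
  act := fun i => oact i.1
  steps := by
    intro k
    fin_cases k <;> rfl

lemma trans_key {n : ℕ} (f : Frag Ttrans n) (s : Fin 2 → ℤ)
    (hpc0 : f.pc 0 = (0 : Fin 6)) (hst0 : f.st 0 = s) :
    ∀ i (hi : i < n + 1), ∃ h6 : i < 6, f.pc ⟨i, hi⟩ = ⟨i, h6⟩ ∧ f.st ⟨i, hi⟩ = tstf s i := by
  intro i
  induction i with
  | zero =>
    intro hi
    refine ⟨by omega, ?_, ?_⟩
    · exact hpc0
    · exact hst0
  | succ i ih =>
    intro hi
    have hi' : i < n + 1 := by omega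
    obtain ⟨h5, hpc, hst⟩ := ih hi'
    have hin : i < n := by omega
    have hstep := f.steps ⟨i, hin⟩
    have hcs : (⟨i, hin⟩ : Fin n).castSucc = ⟨i, hi'⟩ := rfl
    have hsu : (⟨i, hin⟩ : Fin n).succ = ⟨i + 1, hi⟩ := rfl
    rw [hcs, hsu, hpc, hst] at hstep
    interval_cases i <;>
      simp only [Ttrans, stepTrans, Fin.ext_iff, Fin.val_zero, Fin.val_one, show ((2:Fin 6):ℕ) = 2 from rfl, show ((3:Fin 6):ℕ) = 3 from rfl, show ((4:Fin 6):ℕ) = 4 from rfl, show ((5:Fin 6):ℕ) = 5 from rfl, Nat.reduceEqDiff, reduceIte, Option.some.injEq, Prod.mk.injEq, if_true, if_false] at hstep <;>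
      first
        | (obtain ⟨-, h1, h2⟩ := hstep
           exact ⟨by omega, Fin.ext (by rw [← h1]), h2.symm.trans rfl⟩)
        | exact Option.noConfusion hstep
        | exact absurd hstep (by simp)

lemma trans_act {n : ℕ} (f : Frag Ttrans n) (s : Fin 2 → ℤ)
    (hpc0 : f.pc 0 = (0 : Fin 6)) (hst0 : f.st 0 = s) :
    ∀ i (hin : i < n), f.act ⟨i, hin⟩ = tact i := by
  intro i hin
  have hi' : i < n + 1 := by omega
  obtain ⟨h5, hpc, hst⟩ := trans_key f s hpc0 hst0 i hi'
  have hstep := f.steps ⟨i, hin⟩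
  have hcs : (⟨i, hin⟩ : Fin n).castSucc = ⟨i, hi'⟩ := rfl
  rw [hcs, hpc, hst] at hstep
  interval_cases i <;>
    simp only [Ttrans, stepTrans, Fin.ext_iff, Fin.val_zero, Fin.val_one, show ((2:Fin 6):ℕ) = 2 from rfl, show ((3:Fin 6):ℕ) = 3 from rfl, show ((4:Fin 6):ℕ) = 4 from rfl, show ((5:Fin 6):ℕ) = 5 from rfl, Nat.reduceEqDiff, reduceIte, Option.some.injEq, Prod.mk.injEq, if_true, if_false] at hstep <;>
    first
      | (obtain ⟨h1, -, -⟩ := hstep; exact h1.symm)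
      | exact Option.noConfusion hstep
      | exact absurd hstep (by simp)

/-- Uniqueness of the `Ttrans` lock-to-lock transition. -/
lemma trans_star (s : Fin 2 → ℤ) (l : Fin 1) (Ra Wa Rb Wb : Set (Fin 2))
    (h' : Fin 6) (s' : Fin 2 → ℤ)
    (H : StarStep Ttrans (show Ttrans.H from (0 : Fin 6)) s l Ra Wa Rb Wb h' s') :
    h' = 5 ∧ s' = u012 s ∧ Rb = ∅ ∧ Wb = ∅ := by
  obtain ⟨n, f, hn, k, hpc0, hst0, hpcl, hstl, hlk, hul, hmemA, hmemB, hend, hRa, hWa, hRb, hWb⟩ := H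
  have key := trans_key f s hpc0 hst0
  have hact := trans_act f s hpc0 hst0
  have hn5 : n ≤ 5 := by have := (key n (by omega)).fst; omega
  have hk : (k : ℕ) = 4 := by
    have hta := hact k.1 k.2
    have hk' : f.act ⟨k.1, k.2⟩ = Action.ul l := by
      rw [show (⟨k.1, k.2⟩ : Fin n) = k from rfl]; exact hul
    rw [hk'] at hta
    have h4 : 4 ≤ (k : ℕ) := by
      match hj : (k : ℕ) with
      | 0 | 1 | 2 | 3 => rw [hj] at hta; simp [tact] at hta
      | (m+4) => omega
    have := k.2
    omega
  have hn5' : n = 5 := by omega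
  subst hn5'
  have hlast : (Fin.last 5) = (⟨5, by omega⟩ : Fin 6) := rfl
  obtain ⟨h6, hpc5, hst5⟩ := key 5 (by omega)
  constructor
  · rw [← hpcl, hlast, hpc5]; rfl
  constructor
  · rw [← hstl, hlast, hst5]; rfl
  constructor
  · rw [hRb]
    ext x
    simp only [Set.mem_setOf_eq, Set.mem_empty_iff_false, iff_false, not_exists]
    rintro i ⟨hi1, hi2⟩
    have := hact i.1 i.2
    rw [show (⟨i.1, i.2⟩ : Fin 5) = i from rfl] at this
    rw [this] at hi2
    have : (i : ℕ) = 4 := by have := i.2; omega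
    rw [hk] at hi1; omega
  · rw [hWb]
    ext x
    simp only [Set.mem_setOf_eq, Set.mem_empty_iff_false, iff_false, not_exists]
    rintro i ⟨hi1, hi2⟩
    rw [hk] at hi1
    have := i.2; omega

/-- The matching `Torig` state trace. -/
def origTrace (t' : STrace (Fin 2) (Fin 1)) : STrace (Fin 2) (Fin 1) where
  m := 1
  lkOf := fun _ => 0
  sE := t'.sE
  sO := t'.sO
  RE := fun _ => {x : Fin 2 | ∃ i : Fin 5, 0 < (i : ℕ) ∧ (i : ℕ) < 3 ∧ oact i = Action.rd x}
  WE := fun _ => {x : Fin 2 | ∃ i : Fin 5, 0 < (i : ℕ) ∧ (i : ℕ) < 3 ∧ oact i = Action.wr x}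
  RO := fun _ => {x : Fin 2 | ∃ i : Fin 5, 3 < (i : ℕ) ∧ oact i = Action.rd x}
  WO := fun _ => {x : Fin 2 | ∃ i : Fin 5, 3 < (i : ℕ) ∧ oact i = Action.wr x}

/-- Roach motel reordering is a valid refinement: `check(T',T)` holds. -/
theorem roach_motel_check : check Ttrans Torig := by
  intro t' ht'
  obtain ⟨h, hh0, hstar, hlink⟩ := ht'
  rcases Nat.lt_or_ge t'.m 1 with hm | hm
  · -- t'.m = 0
    refine ⟨t', ⟨fun _ => Torig.h0, rfl, ?_, ?_⟩, Or.inl ⟨rfl, ?_, ?_, ?_, ?_, ?_, ?_, ?_, ?_⟩⟩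
    all_goals intro j hj <;> omega
  · -- t'.m ≥ 1
    have hm2 : t'.m = 1 := by
      by_contra hne
      have h2 : 2 ≤ t'.m := by omega
      have hs0 := hstar 0 (by omega)
      rw [hh0] at hs0
      have hq := trans_star _ _ _ _ _ _ _ _ hs0
      have hs1 := hstar 1 (by omega)
      rw [hq.1] at hs1
      obtain ⟨n, f, hn, k, hpc0, hst0, -⟩ := hs1
      have hstep := f.steps ⟨0, hn⟩
      have hcs : (⟨0, hn⟩ : Fin n).castSucc = (0 : Fin (n + 1)) := rfl
      rw [hcs, hpc0] at hstep
      simp [Ttrans, stepTrans] at hstep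
    have hs0 := hstar 0 (by omega)
    rw [hh0] at hs0
    obtain ⟨hh1, hsO, hRO, hWO⟩ := trans_star _ _ _ _ _ _ _ _ hs0
    set s := t'.sE 0 with hsdef
    -- the matching original trace
    refine ⟨origTrace t',
      ⟨show ℕ → Torig.H from fun j => if j = 0 then (0 : Fin 6) else (5 : Fin 6), rfl, ?_, ?_⟩, Or.inl ⟨hm2, ?_⟩⟩
    · intro j hj
      have hj0 : j = 0 := by
        have hm1 : (origTrace t').m = 1 := rfl
        omega
      subst hj0
      refine ⟨5, origFrag s, by omega, ⟨3, by omega⟩, rfl, rfl, rfl, ?_, by rfl, by rfl, ?_, ?_, ?_, by rfl, by rfl, by rfl, by rfl⟩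
      · show (origFrag s).st (Fin.last 5) = t'.sO 0
        rw [hsO]; rfl
      · intro i h1 h2
        show isMem (oact (i : ℕ))
        have := i.2
        interval_cases hv : (i : ℕ) <;> trivial
      · intro i h1
        show isMem (oact (i : ℕ))
        have := i.2
        interval_cases hv : (i : ℕ) <;> trivial
      · right; rfl
    · intro j hj0 hj1
      have hm1 : (origTrace t').m = 1 := rfl
      omega
    · refine ⟨?_, ?_, ?_, ?_, ?_, ?_, ?_, ?_⟩
      · intro j hj; exact Subsingleton.elim _ _
      · intro j hj y hy
        have hj0 : j = 0 := by
          have hm1 : (origTrace t').m = 1 := rfl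
          omega
        subst hj0
        fin_cases y
        · exact Or.inl (Or.inr (Or.inr ⟨⟨1, by omega⟩, by simp, by simp, by rfl⟩))
        · exact Or.inl (Or.inr (Or.inr ⟨⟨2, by omega⟩, by simp, by simp, by rfl⟩))
      · intro j hj y hy
        have hj0 : j = 0 := by
          have hm1 : (origTrace t').m = 1 := rfl
          omega
        subst hj0
        fin_cases y
        · exact Or.inl (Or.inr ⟨⟨1, by omega⟩, by simp, by simp, by rfl⟩)
        · exact Or.inl (Or.inr ⟨⟨2, by omega⟩, by simp, by simp, by rfl⟩)
      · intro j hj y hy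
        have hj0 : j = 0 := by
          have hm1 : (origTrace t').m = 1 := rfl
          omega
        subst hj0
        rw [hRO] at hy
        exact absurd hy (Set.notMem_empty y)
      · intro j hj y hy
        have hj0 : j = 0 := by
          have hm1 : (origTrace t').m = 1 := rfl
          omega
        subst hj0
        rw [hWO] at hy
        exact absurd hy (Set.notMem_empty y)
      · intro j hj y _
        have hj0 : j = 0 := by
          have hm1 : (origTrace t').m = 1 := rfl
          omega
        subst hj0; rfl
      · intro j hj0 hj1
        have hm1 : (origTrace t').m = 1 := rfl
        omega
      · intro j hj y _
        have hj0 : j = 0 := by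
          have hm1 : (origTrace t').m = 1 := rfl
          omega
        subst hj0; rfl

end DRF
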